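/- For integers k, s ≥ 3, if gcd(k,s) does not divide 2, then ℚ(cos(2π/k), cos(2π/s)) = ℚ(cos(2π/m)) where m = lcm(k,s). -/

import Mathlib

open Real IntermediateField Polynomial

lemma cos_eq_imp (k : ℕ) (hk : k ≠ 0) (i : ℕ)
    (h : Real.cos (2*π*i/k) = Real.cos (2*π/k)) :
    (k:ℤ) ∣ (i:ℤ) - 1 ∨ (k:ℤ) ∣ (i:ℤ) + 1 := by
  have hk' : (k:ℝ) ≠ 0 := Nat.cast_ne_zero.mpr hk
  have h2π : (2*π : ℝ) ≠ 0 := by positivity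
  rw [Real.cos_eq_cos_iff] at h
  obtain ⟨t, ht | ht⟩ := h
  · left
    have ht' : 2*π = 2*↑t*π*↑k + 2*π*↑i := by field_simp at ht; linear_combination (2*π) * ht
    have h2 : 2*π*((i:ℝ) - 1 + t*k) = 2*π*0 := by linear_combination -ht'
    have h4 : (i:ℝ) - 1 + t*k = 0 := mul_left_cancel₀ h2π h2
    have h5 : (i:ℝ) - 1 = (-t)*k := by linarith
    have h6 : ((i:ℤ) - 1 : ℤ) = (-t)*k := by exact_mod_cast h5
    exact ⟨-t, by linarith [h6]⟩
  · right
    have ht' : 2*π = 2*↑t*π*↑k - 2*π*↑i := by field_simp at ht; linear_combination (2*π) * ht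
    have h2 : 2*π*((i:ℝ) + 1 - t*k) = 2*π*0 := by linear_combination ht'
    have h4 : (i:ℝ) + 1 - t*k = 0 := mul_left_cancel₀ h2π h2
    have h5 : (i:ℝ) + 1 = t*k := by linarith
    have h6 : ((i:ℤ) + 1 : ℤ) = t*k := by exact_mod_cast h5
    exact ⟨t, by linarith [h6]⟩

lemma cos_eq_of_dvd (m : ℕ) (hm : m ≠ 0) (i : ℕ)
    (h : (m:ℤ) ∣ (i:ℤ) - 1 ∨ (m:ℤ) ∣ (i:ℤ) + 1) :
    Real.cos (2*π*i/m) = Real.cos (2*π/m) := by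
  have hm' : (m:ℝ) ≠ 0 := Nat.cast_ne_zero.mpr hm
  obtain ⟨t, ht⟩ | ⟨t, ht⟩ := h
  · have hi : (i:ℝ) = 1 + m*t := by
      have : (i:ℤ) = 1 + m*t := by linarith
      exact_mod_cast this
    rw [hi]
    have : 2*π*(1 + m*t)/m = 2*π/m + t*(2*π) := by field_simp
    rw [this, Real.cos_add_int_mul_two_pi]
  · have hi : (i:ℝ) = -1 + m*t := by
      have : (i:ℤ) = -1 + m*t := by linarith
      exact_mod_cast this
    rw [hi]
    have : 2*π*(-1 + m*t)/m = -(2*π/m) + t*(2*π) := by field_simp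
    rw [this, Real.cos_add_int_mul_two_pi, Real.cos_neg]

lemma cos_lcm_mem (k s : ℕ) (hk : 3 ≤ k) (hs : 3 ≤ s)
    (hgcd : ¬ (Nat.gcd k s ∣ 2)) :
    Real.cos (2*π/(Nat.lcm k s)) ∈ ℚ⟮Real.cos (2*π/k), Real.cos (2*π/s)⟯ := by
  set m := Nat.lcm k s with hmdef
  have hk0 : k ≠ 0 := by omega
  have hs0 : s ≠ 0 := by omega
  have hm0 : m ≠ 0 := Nat.lcm_ne_zero hk0 hs0
  haveI : NeZero m := ⟨hm0⟩
  have hkm : k ∣ m := Nat.dvd_lcm_left k s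
  have hsm : s ∣ m := Nat.dvd_lcm_right k s
  have hm3 : 3 ≤ m := le_trans hk (Nat.le_of_dvd (Nat.pos_of_ne_zero hm0) hkm)
  -- cyclotomic setup
  set ζ : ℂ := Complex.exp (2 * π * Complex.I / m) with hζdef
  have hζ : IsPrimitiveRoot ζ m := Complex.isPrimitiveRoot_exp m hm0
  set K : IntermediateField ℚ ℂ := ℚ⟮ζ⟯ with hKdef
  have hint : IsIntegral ℚ ζ := (hζ.isIntegral (by omega)).tower_top
  have hsub : K.toSubalgebra = Algebra.adjoin ℚ {ζ} :=
    IntermediateField.adjoin_simple_toSubalgebra_of_isAlgebraic hint.isAlgebraic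
  let n : ℕ+ := ⟨m, by omega⟩
  haveI hice : IsCyclotomicExtension {(n:ℕ)} ℚ K := by
    have h1 : IsCyclotomicExtension {(n:ℕ)} ℚ (Algebra.adjoin ℚ ({ζ} : Set ℂ)) :=
      IsPrimitiveRoot.adjoin_isCyclotomicExtension ℚ hζ
    exact IsCyclotomicExtension.equiv {(n:ℕ)} ℚ _ (Subalgebra.equivOfEq _ _ hsub.symm)
  haveI : FiniteDimensional ℚ K := IsCyclotomicExtension.finiteDimensional {(n:ℕ)} ℚ K
  haveI : IsGalois ℚ K := IsCyclotomicExtension.isGalois {(n:ℕ)} ℚ K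
  -- elements
  set ζ' : K := IntermediateField.AdjoinSimple.gen ℚ ζ with hζ'def
  have hζ'coe : (ζ' : ℂ) = ζ := rfl
  have hζ' : IsPrimitiveRoot ζ' m := by
    rw [← IsPrimitiveRoot.coe_submonoidClass_iff]; exact hζ
  set c : ℕ → K := fun j => (ζ'^j + (ζ'^j)⁻¹)/2 with hcdef
  have hzp : ∀ j : ℕ, (ζ^j + (ζ^j)⁻¹) = 2 * ((Real.cos (2*π*j/m) : ℝ) : ℂ) := by
    intro j
    rw [hζdef, ← Complex.exp_nat_mul, ← Complex.exp_neg, Complex.ofReal_cos, Complex.two_cos]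
    congr 2
    · push_cast; ring
    · push_cast; ring
  have hc : ∀ j : ℕ, (c j : ℂ) = ((Real.cos (2*π*j/m) : ℝ) : ℂ) := by
    intro j
    have h1 : (c j : ℂ) = ((ζ:ℂ)^j + ((ζ:ℂ)^j)⁻¹)/2 := by
      show K.val (c j) = _
      simp only [hcdef, map_div₀, map_add, map_inv₀, map_pow, map_ofNat]
      rfl
    rw [h1, hzp j]; ring
  -- the special indices
  obtain ⟨rk, hrk⟩ : ∃ rk, m = k * rk := hkm
  obtain ⟨rs, hrs⟩ : ∃ rs, m = s * rs := hsm
  have hrk0 : rk ≠ 0 := by rintro rfl; omega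
  have hrs0 : rs ≠ 0 := by rintro rfl; omega
  have hmR : (m:ℝ) = (k:ℝ)*(rk:ℝ) := by exact_mod_cast congrArg (Nat.cast : ℕ → ℝ) hrk
  have hmRs : (m:ℝ) = (s:ℝ)*(rs:ℝ) := by exact_mod_cast congrArg (Nat.cast : ℕ → ℝ) hrs
  have hrkR : 2*π*(rk:ℝ)/m = 2*π/k := by
    rw [hmR]; field_simp
  have hrsR : 2*π*(rs:ℝ)/m = 2*π/s := by
    rw [hmRs]; field_simp
  set F : IntermediateField ℚ K := adjoin ℚ {c rk, c rs} with hFdef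
  -- main claim
  have hmain : c 1 ∈ F := by
    rw [← IsGalois.fixedField_fixingSubgroup F]
    exact fun σ => by
      -- σ fixes generators
      have hfix : ∀ x ∈ F, σ.1 x = x := (IntermediateField.mem_fixingSubgroup_iff F σ.1).mp σ.2
      obtain ⟨i, him, hi⟩ := hζ'.eq_pow_of_pow_eq_one
        ((hζ'.map_of_injective σ.1.injective).pow_eq_one)
      have hσc : ∀ j : ℕ, σ.1 (c j) = c (i*j) := by
        intro j
        simp only [hcdef]
        rw [map_div₀, map_add, map_inv₀, map_pow, ← hi, map_ofNat, ← pow_mul]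
      have hcos : ∀ j : ℕ, j ≠ 0 → c (i*j) = c j →
          Real.cos (2*π*(i:ℝ)*j/m) = Real.cos (2*π*j/m) := by
        intro j hj hcj
        have h1 : (c (i*j) : ℂ) = (c j : ℂ) := congrArg _ hcj
        rw [hc, hc] at h1
        have h2 : Real.cos (2*π*(i*j : ℕ)/m) = Real.cos (2*π*j/m) :=
          Complex.ofReal_injective h1
        have h3 : ((i*j : ℕ) : ℝ) = (i:ℝ)*(j:ℝ) := by push_cast; ring
        rwa [h3, ← mul_assoc] at h2
      -- derive congruences
      have hfk : σ.1 (c rk) = c rk := hfix _ (subset_adjoin ℚ _ (Set.mem_insert _ _))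
      have hfs : σ.1 (c rs) = c rs :=
        hfix _ (subset_adjoin ℚ _ (Set.mem_insert_of_mem _ (Set.mem_singleton _)))
      have hck : Real.cos (2*π*(i:ℝ)/k) = Real.cos (2*π/k) := by
        have := hcos rk hrk0 (by rw [← hσc rk]; exact hfk)
        have e1 : 2*π*(i:ℝ)*rk/m = 2*π*(i:ℝ)/k := by rw [hmR]; field_simp
        rwa [e1, hrkR] at this
      have hcs : Real.cos (2*π*(i:ℝ)/s) = Real.cos (2*π/s) := by
        have := hcos rs hrs0 (by rw [← hσc rs]; exact hfs)
        have e1 : 2*π*(i:ℝ)*rs/m = 2*π*(i:ℝ)/s := by rw [hmRs]; field_simp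
        rwa [e1, hrsR] at this
      have hdk := cos_eq_imp k hk0 i hck
      have hds := cos_eq_imp s hs0 i hcs
      -- combine
      have hdm : (m:ℤ) ∣ (i:ℤ) - 1 ∨ (m:ℤ) ∣ (i:ℤ) + 1 := by
        have hgk : ((Nat.gcd k s : ℕ):ℤ) ∣ (k:ℤ) := Int.natCast_dvd_natCast.mpr (Nat.gcd_dvd_left k s)
        have hgs : ((Nat.gcd k s : ℕ):ℤ) ∣ (s:ℤ) := Int.natCast_dvd_natCast.mpr (Nat.gcd_dvd_right k s)
        have hlcm : ∀ t : ℤ, (k:ℤ) ∣ t → (s:ℤ) ∣ t → (m:ℤ) ∣ t := by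
          intro t h1 h2
          have := Int.coe_lcm_dvd h1 h2
          have he : (Int.lcm (k:ℤ) (s:ℤ) : ℤ) = (m:ℤ) := by
            simp [Int.lcm, hmdef]
          rwa [he] at this
        rcases hdk with h1 | h1 <;> rcases hds with h2 | h2
        · exact Or.inl (hlcm _ h1 h2)
        · exfalso
          apply hgcd
          have : ((Nat.gcd k s : ℕ):ℤ) ∣ ((i:ℤ) + 1) - ((i:ℤ) - 1) :=
            dvd_sub (hgs.trans h2) (hgk.trans h1)
          have h2' : ((Nat.gcd k s : ℕ):ℤ) ∣ (2:ℤ) := by simpa using this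
          exact_mod_cast h2'
        · exfalso
          apply hgcd
          have : ((Nat.gcd k s : ℕ):ℤ) ∣ ((i:ℤ) + 1) - ((i:ℤ) - 1) :=
            dvd_sub (hgk.trans h1) (hgs.trans h2)
          have h2' : ((Nat.gcd k s : ℕ):ℤ) ∣ (2:ℤ) := by simpa using this
          exact_mod_cast h2'
        · exact Or.inr (hlcm _ h1 h2)
      -- conclude σ fixes c 1
      show σ.1 (c 1) = c 1
      rw [hσc 1, mul_one]
      apply Subtype.ext
      have h1 : (c i : ℂ) = (c 1 : ℂ) := by
        rw [hc, hc, Nat.cast_one]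
        norm_cast
        have := cos_eq_of_dvd m hm0 i hdm
        rwa [mul_one]
      exact h1
  -- transfer to ℂ
  have himg : (c 1 : ℂ) ∈ adjoin ℚ
      {((Real.cos (2*π/k) : ℝ):ℂ), ((Real.cos (2*π/s) : ℝ):ℂ)} := by
    have h1 : K.val (c 1) ∈ (F.map K.val : Set ℂ) := ⟨c 1, hmain, rfl⟩
    rw [hFdef] at h1
    erw [IntermediateField.adjoin_map] at h1
    have himage : K.val '' {c rk, c rs}
        = {((Real.cos (2*π/k) : ℝ):ℂ), ((Real.cos (2*π/s) : ℝ):ℂ)} := by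
      rw [Set.image_insert_eq, Set.image_singleton]
      have e1 : K.val (c rk) = ((Real.cos (2*π/k) : ℝ):ℂ) := by
        show ((c rk : K) : ℂ) = _
        rw [hc, hrkR]
      have e2 : K.val (c rs) = ((Real.cos (2*π/s) : ℝ):ℂ) := by
        show ((c rs : K) : ℂ) = _
        rw [hc, hrsR]
      rw [e1, e2]
    rw [himage] at h1
    exact h1
  -- pull back to ℝ
  have hc1 : (c 1 : ℂ) = ((Real.cos (2*π/m) : ℝ):ℂ) := by
    rw [hc, Nat.cast_one, mul_one]
  set g : ℝ →ₐ[ℚ] ℂ := Complex.ofRealAm.restrictScalars ℚ with hgdef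
  have hgim : adjoin ℚ {((Real.cos (2*π/k) : ℝ):ℂ), ((Real.cos (2*π/s) : ℝ):ℂ)}
      = (adjoin ℚ {Real.cos (2*π/k), Real.cos (2*π/s)}).map g := by
    rw [IntermediateField.adjoin_map, Set.image_insert_eq, Set.image_singleton]
    rfl
  rw [hc1, hgim] at himg
  obtain ⟨y, hy, hyeq⟩ := himg
  have : y = Real.cos (2*π/m) := Complex.ofReal_injective hyeq
  rwa [← this]

lemma cos_div_mem_adjoin {k m : ℕ} (hk : k ≠ 0) (hm : m ≠ 0) (hkm : k ∣ m) :
    Real.cos (2*π/k) ∈ ℚ⟮Real.cos (2*π/(m:ℕ))⟯ := by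
  obtain ⟨r, rfl⟩ := hkm
  have hr : r ≠ 0 := by rintro rfl; simp at hm
  have h1 : Real.cos (2*π/k) = (Chebyshev.T ℝ (r:ℤ)).eval (Real.cos (2*π/(k*r:ℕ))) := by
    rw [Chebyshev.T_real_cos]
    congr 1
    have : ((k*r : ℕ) : ℝ) = (k:ℝ)*(r:ℝ) := by push_cast; ring
    rw [this]
    field_simp
    push_cast
    ring
  rw [h1, ← Chebyshev.aeval_T (R := ℚ)]
  have : Algebra.adjoin ℚ {Real.cos (2*π/(k*r:ℕ))} ≤ (ℚ⟮Real.cos (2*π/(k*r:ℕ))⟯).toSubalgebra :=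
    Algebra.adjoin_le (by simpa using IntermediateField.mem_adjoin_simple_self ℚ _)
  exact this (by rw [Algebra.adjoin_singleton_eq_range_aeval]; exact ⟨_, rfl⟩)

theorem F_ks_eq_F_lcm (k s : ℕ) (hk : 3 ≤ k) (hs : 3 ≤ s)
    (hgcd : ¬ (Nat.gcd k s ∣ 2)) :
    ℚ⟮Real.cos (2*π/k), Real.cos (2*π/s)⟯ = ℚ⟮Real.cos (2*π/(Nat.lcm k s))⟯ := by
  have hk0 : k ≠ 0 := by omega
  have hs0 : s ≠ 0 := by omega
  have hm0 : Nat.lcm k s ≠ 0 := Nat.lcm_ne_zero hk0 hs0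
  apply le_antisymm
  · rw [show (ℚ⟮Real.cos (2*π/k), Real.cos (2*π/s)⟯ : IntermediateField ℚ ℝ)
        = adjoin ℚ {Real.cos (2*π/k), Real.cos (2*π/s)} from rfl,
      IntermediateField.adjoin_le_iff]
    rintro x hx
    rcases hx with rfl | hx
    · exact cos_div_mem_adjoin hk0 hm0 (Nat.dvd_lcm_left k s)
    · rw [Set.mem_singleton_iff] at hx
      subst hx
      exact cos_div_mem_adjoin hs0 hm0 (Nat.dvd_lcm_right k s)
  · rw [IntermediateField.adjoin_simple_le_iff]
    exact cos_lcm_mem k s hk hs hgcd
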